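/- arXiv:2509.20994 — 3 statements merged into one kernel-verified Lean document; each statement's English description precedes it below -/
import Mathlib

section
/- Let n, r, k, s be integers with k ≥ 2, r ≥ 0, 1 ≤ s ≤ k−1, and n = k·r + s. Let m = n(n−1)/2 be the number of edges of the complete graph K_n. Then f_k(K_n) = (k−1)/k·m + (k−1)/(2k)·h(m) + (k−1)/(2k) − s(k−s)/(2k), and this maximum is attained by a balanced k-partition. -/
open Finset

noncomputable def hfun (x : ℝ) : ℝ := Real.sqrt (2 * x + 1 / 4) - 1 / 2

variable {V : Type*} [Fintype V] [DecidableEq V]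

/-- Number of edges of `G` with both endpoints in `S`. -/
def eIn (G : SimpleGraph V) [DecidableRel G.Adj] (S : Finset V) : ℕ :=
  (Finset.univ.filter (fun p : V × V => G.Adj p.1 p.2 ∧ p.1 ∈ S ∧ p.2 ∈ S)).card / 2

/-- Number of edges of `G` with one endpoint in `S` and the other in `T` (for disjoint `S`, `T`). -/
def eCross (G : SimpleGraph V) [DecidableRel G.Adj] (S T : Finset V) : ℕ :=
  (Finset.univ.filter (fun p : V × V => G.Adj p.1 p.2 ∧ p.1 ∈ S ∧ p.2 ∈ T)).card

/-- `P` is a partition of the vertex set into `k` pairwise disjoint (possibly empty) parts. -/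
def IsKPartition {k : ℕ} (P : Fin k → Finset V) : Prop :=
  (∀ i j : Fin k, i ≠ j → Disjoint (P i) (P j)) ∧ ∀ v : V, ∃ i, v ∈ P i

/-- The number of crossing edges of a `k`-partition. -/
def crossTotal (G : SimpleGraph V) [DecidableRel G.Adj] {k : ℕ} (P : Fin k → Finset V) : ℕ :=
  ∑ i : Fin k, ∑ j : Fin k, if i < j then eCross G (P i) (P j) else 0

/-- `f_k(G)`: the maximum number of crossing edges over all `k`-partitions of `G`. -/
noncomputable def maxCut (G : SimpleGraph V) [DecidableRel G.Adj] (k : ℕ) : ℕ :=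
  sSup {n : ℕ | ∃ P : Fin k → Finset V, IsKPartition P ∧ crossTotal G P = n}

/-- A `k`-partition is balanced if any two parts differ in size by at most 1. -/
def IsBalanced {V : Type*} {k : ℕ} (P : Fin k → Finset V) : Prop :=
  ∀ i j : Fin k, (P i).card ≤ (P j).card + 1

/- ----------------- auxiliary lemmas ----------------- -/

lemma eCross_top' (S T : Finset V)
    (h : Disjoint S T) : eCross (⊤ : SimpleGraph V) S T = S.card * T.card := by
  rw [eCross]
  have : Finset.univ.filter (fun p : V × V => (⊤ : SimpleGraph V).Adj p.1 p.2 ∧ p.1 ∈ S ∧ p.2 ∈ T) = S ×ˢ T := by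
    ext p
    simp only [mem_filter, mem_univ, true_and, SimpleGraph.top_adj, mem_product]
    constructor
    · rintro ⟨_, h1, h2⟩; exact ⟨h1, h2⟩
    · rintro ⟨h1, h2⟩
      exact ⟨fun e => (Finset.disjoint_left.mp h h1 (e ▸ h2)), h1, h2⟩
  rw [this, card_product]

lemma sum_card_eq' {k : ℕ} (P : Fin k → Finset V) (hP : IsKPartition P) :
    ∑ i, (P i).card = Fintype.card V := by
  classical
  have hcover : Finset.univ.biUnion P = Finset.univ := by
    ext v
    simpa using hP.2 v
  have := Finset.card_biUnion (s := (Finset.univ : Finset (Fin k))) (t := P)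
    (fun i _ j _ hij => hP.1 i j hij)
  rw [hcover] at this
  rw [← this, Finset.card_univ]

lemma key_identity' {k : ℕ} (P : Fin k → Finset V) (hP : IsKPartition P) :
    2 * crossTotal (⊤ : SimpleGraph V) P + ∑ i, (P i).card ^ 2
      = (Fintype.card V) ^ 2 := by
  classical
  set a : Fin k → ℕ := fun i => (P i).card with ha
  have hsq : (Fintype.card V) ^ 2 = ∑ i, ∑ j, a i * a j := by
    rw [← sum_card_eq' P hP, sq, Finset.sum_mul_sum]
  have hsplit : ∀ i j : Fin k, a i * a j =
      (if i < j then a i * a j else 0) + (if j < i then a i * a j else 0)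
        + (if i = j then a i * a j else 0) := by
    intro i j
    rcases lt_trichotomy i j with h | h | h
    · simp [h, h.ne, asymm h, h.ne']
    · simp [h]
    · simp [h, h.ne', asymm h, h.ne]
  have hct : crossTotal (⊤ : SimpleGraph V) P = ∑ i, ∑ j, if i < j then a i * a j else 0 := by
    rw [crossTotal]
    refine Finset.sum_congr rfl fun i _ => Finset.sum_congr rfl fun j _ => ?_
    split_ifs with h
    · exact eCross_top' _ _ (hP.1 i j h.ne)
    · rfl
  have hswap : ∑ i, ∑ j, (if j < i then a i * a j else 0)
      = ∑ i, ∑ j, (if i < j then a i * a j else 0) := by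
    rw [Finset.sum_comm]
    refine Finset.sum_congr rfl fun i _ => Finset.sum_congr rfl fun j _ => ?_
    split_ifs with h
    · ring
    · rfl
  have hdiag : ∑ i : Fin k, ∑ j, (if i = j then a i * a j else 0) = ∑ i, a i ^ 2 := by
    refine Finset.sum_congr rfl fun i _ => ?_
    rw [Finset.sum_ite_eq (Finset.univ) i (fun j => a i * a j)]
    simp [sq]
  calc 2 * crossTotal (⊤ : SimpleGraph V) P + ∑ i, a i ^ 2
      = (∑ i, ∑ j, if i < j then a i * a j else 0)
        + (∑ i, ∑ j, if j < i then a i * a j else 0)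
        + (∑ i : Fin k, ∑ j, if i = j then a i * a j else 0) := by
        rw [hct, hswap, hdiag]; ring
    _ = ∑ i, ∑ j, a i * a j := by
        rw [← Finset.sum_add_distrib, ← Finset.sum_add_distrib]
        refine Finset.sum_congr rfl fun i _ => ?_
        rw [← Finset.sum_add_distrib, ← Finset.sum_add_distrib]
        exact Finset.sum_congr rfl fun j _ => (hsplit i j).symm
    _ = (Fintype.card V) ^ 2 := hsq.symm

lemma card_fiber' (n k r s : ℕ) (hk : 0 < k) (hs : s < k) (hn : n = k * r + s) (i : Fin k) :
    (Finset.univ.filter fun v : Fin n => (v : ℕ) % k = (i : ℕ)).card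
      = r + if (i : ℕ) < s then 1 else 0 := by
  rw [← Finset.card_range (r + if (i : ℕ) < s then 1 else 0)]
  refine Finset.card_bij' (fun v _ => (v : ℕ) / k)
      (fun q hq => (⟨k * q + i, ?_⟩ : Fin n)) ?_ ?_ ?_ ?_
  · rw [Finset.mem_range] at hq
    rcases Nat.lt_or_ge (i : ℕ) s with h | h
    · simp only [h, if_true] at hq
      have : k * q ≤ k * r := Nat.mul_le_mul_left k (Nat.lt_succ_iff.mp hq)
      omega
    · simp only [Nat.not_lt.mpr h, if_false] at hq
      have : k * (q + 1) ≤ k * r := Nat.mul_le_mul_left k hq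
      have hik : (i : ℕ) < k := i.isLt
      have : k * q + k ≤ k * r := by rwa [Nat.mul_add, Nat.mul_one] at this
      omega
  · intro v hv
    rw [Finset.mem_filter] at hv
    have hmod := hv.2
    have hdm : k * ((v : ℕ) / k) + (v : ℕ) % k = (v : ℕ) := Nat.div_add_mod _ _
    have hvn : (v : ℕ) < n := v.isLt
    rw [Finset.mem_range]
    rcases Nat.lt_or_ge (i : ℕ) s with h | h
    · simp only [h, if_true]
      have : k * ((v : ℕ) / k) < k * (r + 1) := by
        rw [Nat.mul_add, Nat.mul_one]; omega
      exact Nat.lt_of_mul_lt_mul_left this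
    · simp only [Nat.not_lt.mpr h, if_false]
      have : k * ((v : ℕ) / k) < k * r := by omega
      exact Nat.lt_of_mul_lt_mul_left this
  · intro q hq
    simp only [Finset.mem_filter, Finset.mem_univ, true_and]
    show (k * q + (i : ℕ)) % k = (i : ℕ)
    rw [Nat.mul_add_mod, Nat.mod_eq_of_lt i.isLt]
  · intro v hv
    rw [Finset.mem_filter] at hv
    apply Fin.ext
    show k * ((v : ℕ) / k) + (i : ℕ) = (v : ℕ)
    have hdm : k * ((v : ℕ) / k) + (v : ℕ) % k = (v : ℕ) := Nat.div_add_mod _ _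
    omega
  · intro q hq
    show (k * q + (i : ℕ)) / k = q
    rw [Nat.mul_add_div hk, Nat.div_eq_of_lt i.isLt, Nat.add_zero]

lemma card_lt_filter' (k s : ℕ) (hs : s ≤ k) :
    ((Finset.univ : Finset (Fin k)).filter fun i : Fin k => (i : ℕ) < s).card = s := by
  rw [← Finset.card_range s]
  refine Finset.card_bij' (fun i _ => (i : ℕ)) (fun q hq => (⟨q, ?_⟩ : Fin k)) ?_ ?_ ?_ ?_
  · rw [Finset.mem_range] at hq; omega
  · intro i hi; rw [Finset.mem_filter] at hi; rw [Finset.mem_range]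
    simpa using hi.2
  · intro q hq; rw [Finset.mem_range] at hq
    simp only [Finset.mem_filter, Finset.mem_univ, true_and]
    simpa using hq
  · intro i _; exact Fin.ext rfl
  · intro q _; rfl

lemma term_lb' (a r : ℕ) : (2 * r + 1) * a ≤ a ^ 2 + r * (r + 1) := by
  rcases le_or_gt a r with h | h
  · nlinarith
  · nlinarith

lemma sumsq_lb' {k : ℕ} (r s : ℕ) (a : Fin k → ℕ) (hsum : ∑ i, a i = k * r + s) :
    k * r ^ 2 + 2 * r * s + s ≤ ∑ i, a i ^ 2 := by
  have h1 : (2 * r + 1) * (k * r + s) ≤ (∑ i, a i ^ 2) + k * (r * (r + 1)) := by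
    calc (2 * r + 1) * (k * r + s) = ∑ i, (2 * r + 1) * a i := by
          rw [← Finset.mul_sum, hsum]
      _ ≤ ∑ i : Fin k, (a i ^ 2 + r * (r + 1)) :=
          Finset.sum_le_sum fun i _ => term_lb' (a i) r
      _ = (∑ i, a i ^ 2) + k * (r * (r + 1)) := by
          rw [Finset.sum_add_distrib, Finset.sum_const, Finset.card_univ,
            Fintype.card_fin, smul_eq_mul]
  have h2 : (2 * r + 1) * (k * r + s) = k * (r * (r + 1)) + (k * r ^ 2 + 2 * r * s + s) := by
    ring
  rw [h2, add_comm (∑ i, a i ^ 2) (k * (r * (r + 1)))] at h1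
  exact Nat.le_of_add_le_add_left h1

/-- If `n = k·r + s` with `1 ≤ s ≤ k−1` and `m = n(n−1)/2`, then
`f_k(Kₙ) = (k−1)/k·m + (k−1)/(2k)·h(m) + (k−1)/(2k) − s(k−s)/(2k)`,
attained by a balanced partition. -/
theorem stmt_6 (n r k s : ℕ) (hk : 2 ≤ k) (hs1 : 1 ≤ s) (hs2 : s ≤ k - 1)
    (hn : n = k * r + s) (m : ℕ) (hm : m = n * (n - 1) / 2) :
    (maxCut (⊤ : SimpleGraph (Fin n)) k : ℝ)
        = ((k : ℝ) - 1) / k * m + ((k : ℝ) - 1) / (2 * k) * hfun m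
          + ((k : ℝ) - 1) / (2 * k) - (s : ℝ) * ((k : ℝ) - s) / (2 * k) ∧
      ∃ P : Fin k → Finset (Fin n), IsKPartition P ∧ IsBalanced P ∧
        crossTotal (⊤ : SimpleGraph (Fin n)) P = maxCut (⊤ : SimpleGraph (Fin n)) k := by
  have hk0 : 0 < k := by omega
  have hsk : s < k := by omega
  have hn1 : 1 ≤ n := by omega
  -- the balanced partition
  set P₀ : Fin k → Finset (Fin n) :=
    fun i => Finset.univ.filter fun v : Fin n => (v : ℕ) % k = (i : ℕ) with hP₀
  have hpart : IsKPartition P₀ := by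
    constructor
    · intro i j hij
      rw [Finset.disjoint_left]
      intro v hvi hvj
      rw [hP₀, Finset.mem_filter] at hvi hvj
      exact hij (Fin.ext (hvi.2 ▸ hvj.2))
    · intro v
      exact ⟨⟨(v : ℕ) % k, Nat.mod_lt _ hk0⟩, by simp [hP₀]⟩
  have hcard : ∀ i, (P₀ i).card = r + if (i : ℕ) < s then 1 else 0 :=
    fun i => card_fiber' n k r s hk0 hsk hn i
  have hbal : IsBalanced P₀ := by
    intro i j
    rw [hcard i, hcard j]
    split_ifs <;> omega
  -- sum of squares of the balanced partition
  have hsumone : (∑ i : Fin k, if (i : ℕ) < s then 1 else 0) = s := by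
    have h := card_lt_filter' k s (le_of_lt hsk)
    rw [Finset.card_filter] at h
    exact h
  have hsumsq₀ : ∑ i, (P₀ i).card ^ 2 = k * r ^ 2 + 2 * r * s + s := by
    have : ∀ i : Fin k, (P₀ i).card ^ 2
        = r ^ 2 + (2 * r + 1) * (if (i : ℕ) < s then 1 else 0) := by
      intro i
      rw [hcard i]
      split_ifs <;> ring
    rw [Finset.sum_congr rfl fun i _ => this i, Finset.sum_add_distrib,
      Finset.sum_const, Finset.card_univ, Fintype.card_fin, smul_eq_mul,
      ← Finset.mul_sum, hsumone]
    ring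
  set D : ℕ := k * r ^ 2 + 2 * r * s + s with hD
  set c₀ : ℕ := crossTotal (⊤ : SimpleGraph (Fin n)) P₀ with hc₀
  have hkey₀ : 2 * c₀ + D = n ^ 2 := by
    have := key_identity' P₀ hpart
    rwa [hsumsq₀, Fintype.card_fin] at this
  -- every partition's cut is at most c₀
  have hub : ∀ b ∈ {x : ℕ | ∃ P : Fin k → Finset (Fin n),
      IsKPartition P ∧ crossTotal (⊤ : SimpleGraph (Fin n)) P = x}, b ≤ c₀ := by
    rintro b ⟨P, hP, rfl⟩
    have hkey := key_identity' P hP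
    rw [Fintype.card_fin] at hkey
    have hsum : ∑ i, (P i).card = k * r + s := by
      rw [sum_card_eq' P hP, Fintype.card_fin, hn]
    have hlb : D ≤ ∑ i, (P i).card ^ 2 := sumsq_lb' r s _ hsum
    omega
  have hmem : c₀ ∈ {x : ℕ | ∃ P : Fin k → Finset (Fin n),
      IsKPartition P ∧ crossTotal (⊤ : SimpleGraph (Fin n)) P = x} := ⟨P₀, hpart, rfl⟩
  have hmax : maxCut (⊤ : SimpleGraph (Fin n)) k = c₀ := by
    rw [maxCut]
    exact le_antisymm (csSup_le ⟨c₀, hmem⟩ hub) (le_csSup ⟨c₀, hub⟩ hmem)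
  -- 2m = n(n-1)
  have h2m : m * 2 + n = n * n := by
    obtain ⟨t, rfl⟩ : ∃ t, n = t + 1 := ⟨n - 1, by omega⟩
    obtain ⟨w, hw⟩ := Nat.even_mul_succ_self t
    have ht : t + 1 - 1 = t := rfl
    have hm' : m = (t + 1) * t / 2 := by rw [hm, ht]
    have hcomm : (t + 1) * t = w + w := by rw [mul_comm]; exact hw
    have hmw : m = w := by omega
    have hx : (t + 1) * (t + 1) = t * (t + 1) + (t + 1) := by ring
    omega
  -- real versions
  have hkeyR : 2 * (c₀ : ℝ) + ((k : ℝ) * r ^ 2 + 2 * r * s + s) = (n : ℝ) ^ 2 := by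
    exact_mod_cast congrArg (fun x : ℕ => (x : ℝ)) hkey₀
  have h2mR : (m : ℝ) * 2 + n = (n : ℝ) * n := by exact_mod_cast h2m
  have hnR : (n : ℝ) = k * r + s := by exact_mod_cast hn
  have hfunm : hfun (m : ℝ) = (n : ℝ) - 1 := by
    have hsq : 2 * (m : ℝ) + 1 / 4 = ((n : ℝ) - 1 / 2) ^ 2 := by
      linear_combination h2mR
    have hge : (0 : ℝ) ≤ (n : ℝ) - 1 / 2 := by
      have : (1 : ℝ) ≤ (n : ℝ) := by exact_mod_cast hn1
      linarith
    rw [hfun, hsq, Real.sqrt_sq hge]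
    ring
  constructor
  · have key2 : 2 * (k : ℝ) * (c₀ : ℝ)
        = ((k : ℝ) - 1) * (2 * m) + ((k : ℝ) - 1) * n - s * ((k : ℝ) - s) := by
      linear_combination (k : ℝ) * hkeyR - ((k : ℝ) - 1) * h2mR
        + ((n : ℝ) + k * r + s) * hnR
    rw [hmax, hfunm]
    have hkne : (k : ℝ) ≠ 0 := by positivity
    field_simp
    linear_combination key2
  · exact ⟨P₀, hpart, hbal, hmax.symm⟩
end

section
/- Let G be a finite simple graph, k ≥ 2 an integer, and let (V_1, …, V_k) be a k-partition of G of minimum lexicographic order. Then for all i, j ∈ {1, …, k} and every vertex v ∈ V_i: if |N(v) ∩ V_i| ≥ 2 and e(V_i) > e(V_j), then |N(v) ∩ V_j| ≥ 2. -/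
open Finset

variable {V : Type*} [Fintype V] [DecidableEq V]

/-- The values `e(V₁),…,e(V_k)` of a `k`-partition, listed in nonincreasing order. -/
def lexVals {V : Type*} [Fintype V] [DecidableEq V] (G : SimpleGraph V) [DecidableRel G.Adj]
    {k : ℕ} (P : Fin k → Finset V) : List ℕ :=
  Multiset.sort ((Finset.univ : Finset (Fin k)).val.map fun i => eIn G (P i)) (· ≥ ·)

/-- `Q` is lexicographically smaller than `P`. -/
def LexSmaller {V : Type*} [Fintype V] [DecidableEq V] (G : SimpleGraph V) [DecidableRel G.Adj]
    {k : ℕ} (Q P : Fin k → Finset V) : Prop :=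
  List.Lex (· < ·) (lexVals G Q) (lexVals G P)

/- ========= auxiliary lemmas ========= -/

section Aux

/-- number of elements of `M` that are `≥ n`. -/
private def mcnt (n : ℕ) (M : Multiset ℕ) : ℕ := (M.filter (fun x => n ≤ x)).card

private lemma mcnt_cons (n x : ℕ) (M : Multiset ℕ) :
    mcnt n (x ::ₘ M) = mcnt n M + if n ≤ x then 1 else 0 := by
  simp only [mcnt, Multiset.filter_cons]
  split_ifs <;> simp [add_comm]

private lemma mcnt_zero_of (n : ℕ) (M : Multiset ℕ) (h : ∀ x ∈ M, x < n) : mcnt n M = 0 := by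
  simp only [mcnt, Multiset.card_eq_zero, Multiset.filter_eq_nil]
  intro a ha
  exact not_le.2 (h a ha)

private lemma mcnt_pos (n x : ℕ) (M : Multiset ℕ) (hx : x ∈ M) (hnx : n ≤ x) :
    0 < mcnt n M := by
  simp only [mcnt, Multiset.card_pos_iff_exists_mem]
  exact ⟨x, Multiset.mem_filter.2 ⟨hx, by simpa using hnx⟩⟩

private lemma lex_of_mcnt_lists (t : ℕ) :
    ∀ (l l' : List ℕ), l'.Pairwise (· ≥ ·) → l.Pairwise (· ≥ ·) →
    (∀ n, t < n → mcnt n ↑l' = mcnt n ↑l) → mcnt t ↑l' < mcnt t ↑l →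
    List.Lex (· < ·) l' l := by
  intro l
  induction l with
  | nil =>
    intro l' _ _ _ h2
    have : mcnt t (↑([] : List ℕ)) = 0 := by simp [mcnt]
    omega
  | cons a tl ih =>
    intro l' hs' hs h1 h2
    cases l' with
    | nil => exact List.Lex.nil
    | cons a' tl' =>
      have hsc' := List.pairwise_cons.1 hs'
      have hsc := List.pairwise_cons.1 hs
      rcases lt_trichotomy a' a with hlt | heq | hgt
      · exact List.Lex.rel hlt
      · subst heq
        apply List.Lex.cons
        apply ih tl' hsc'.2 hsc.2
        · intro n hn
          have := h1 n hn
          rw [show ((a' :: tl' : List ℕ) : Multiset ℕ) = a' ::ₘ ↑tl' from rfl,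
            show ((a' :: tl : List ℕ) : Multiset ℕ) = a' ::ₘ ↑tl from rfl,
            mcnt_cons, mcnt_cons] at this
          omega
        · have := h2
          rw [show ((a' :: tl' : List ℕ) : Multiset ℕ) = a' ::ₘ ↑tl' from rfl,
            show ((a' :: tl : List ℕ) : Multiset ℕ) = a' ::ₘ ↑tl from rfl,
            mcnt_cons, mcnt_cons] at this
          omega
      · exfalso
        by_cases ht : t < a'
        · have h3 := h1 a' ht
          have h4 : 0 < mcnt a' ↑(a' :: tl') :=
            mcnt_pos a' a' _ (by simp) le_rfl
          have h5 : mcnt a' ↑(a :: tl) = 0 := by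
            apply mcnt_zero_of
            intro x hx
            rcases List.mem_cons.1 (by exact_mod_cast hx) with rfl | hx'
            · exact hgt
            · exact lt_of_le_of_lt (hsc.1 x hx') hgt
          omega
        · have h5 : mcnt t ↑(a :: tl) = 0 := by
            apply mcnt_zero_of
            intro x hx
            rcases List.mem_cons.1 (by exact_mod_cast hx) with rfl | hx'
            · omega
            · have := hsc.1 x hx'; omega
          omega

private lemma lex_of_mcnt (M' M : Multiset ℕ) (t : ℕ)
    (h1 : ∀ n, t < n → mcnt n M' = mcnt n M) (h2 : mcnt t M' < mcnt t M) :
    List.Lex (· < ·) (M'.sort (· ≥ ·)) (M.sort (· ≥ ·)) := by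
  apply lex_of_mcnt_lists t
  · exact Multiset.pairwise_sort ..
  · exact Multiset.pairwise_sort ..
  · intro n hn; rw [Multiset.sort_eq, Multiset.sort_eq]; exact h1 n hn
  · rw [Multiset.sort_eq, Multiset.sort_eq]; exact h2

private def pcnt (G : SimpleGraph V) [DecidableRel G.Adj] (S : Finset V) : ℕ :=
  (Finset.univ.filter (fun p : V × V => G.Adj p.1 p.2 ∧ p.1 ∈ S ∧ p.2 ∈ S)).card

private lemma pcnt_insert (G : SimpleGraph V) [DecidableRel G.Adj] (S : Finset V) (v : V)
    (hv : v ∉ S) :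
    pcnt G (insert v S) = pcnt G S + 2 * (G.neighborFinset v ∩ S).card := by
  classical
  set A : Finset (V × V) := (G.neighborFinset v ∩ S).image (fun w => (v, w)) with hA
  set B : Finset (V × V) := (G.neighborFinset v ∩ S).image (fun w => (w, v)) with hB
  have hset : (Finset.univ.filter
      (fun p : V × V => G.Adj p.1 p.2 ∧ p.1 ∈ insert v S ∧ p.2 ∈ insert v S)) =
      (Finset.univ.filter (fun p : V × V => G.Adj p.1 p.2 ∧ p.1 ∈ S ∧ p.2 ∈ S)) ∪ A ∪ B := by
    ext ⟨x, y⟩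
    simp only [mem_filter, mem_univ, true_and, mem_insert, mem_union, hA, hB, mem_image,
      mem_inter, SimpleGraph.mem_neighborFinset, Prod.mk.injEq]
    constructor
    · rintro ⟨hadj, hx, hy⟩
      rcases hx with rfl | hx
      · rcases hy with rfl | hy
        · exact absurd hadj (G.irrefl)
        · exact Or.inl (Or.inr ⟨y, ⟨hadj, hy⟩, rfl, rfl⟩)
      · rcases hy with rfl | hy
        · exact Or.inr ⟨x, ⟨G.adj_symm hadj, hx⟩, rfl, rfl⟩
        · exact Or.inl (Or.inl ⟨hadj, hx, hy⟩)
    · rintro ((⟨hadj, hx, hy⟩ | ⟨w, ⟨hw1, hw2⟩, rfl, rfl⟩) | ⟨w, ⟨hw1, hw2⟩, rfl, rfl⟩)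
      · exact ⟨hadj, Or.inr hx, Or.inr hy⟩
      · exact ⟨hw1, Or.inl rfl, Or.inr hw2⟩
      · exact ⟨G.adj_symm hw1, Or.inr hw2, Or.inl rfl⟩
  have hdAB : Disjoint A B := by
    simp only [Finset.disjoint_left, hA, hB, mem_image]
    rintro ⟨x, y⟩ ⟨w, hw, hxy⟩ ⟨w', hw', hxy'⟩
    simp only [Prod.mk.injEq] at hxy hxy'
    obtain ⟨rfl, rfl⟩ := hxy
    obtain ⟨rfl, h2⟩ := hxy'
    exact hv (mem_inter.1 hw').2
  have hdFA : Disjoint (Finset.univ.filter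
      (fun p : V × V => G.Adj p.1 p.2 ∧ p.1 ∈ S ∧ p.2 ∈ S)) (A ∪ B) := by
    simp only [Finset.disjoint_left, mem_filter, mem_union, hA, hB, mem_image]
    rintro ⟨x, y⟩ ⟨-, ⟨-, hx, hy⟩⟩ (⟨w, hw, hxy⟩ | ⟨w, hw, hxy⟩) <;>
      simp only [Prod.mk.injEq] at hxy
    · obtain ⟨rfl, rfl⟩ := hxy; exact hv hx
    · obtain ⟨rfl, rfl⟩ := hxy; exact hv hy
  have hcA : A.card = (G.neighborFinset v ∩ S).card := by
    apply Finset.card_image_of_injective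
    intro a b hab; simpa using hab
  have hcB : B.card = (G.neighborFinset v ∩ S).card := by
    apply Finset.card_image_of_injective
    intro a b hab; simpa [Prod.ext_iff] using hab
  rw [pcnt, pcnt, hset, union_assoc, card_union_of_disjoint hdFA,
    card_union_of_disjoint hdAB, hcA, hcB]
  ring

private lemma pcnt_even (G : SimpleGraph V) [DecidableRel G.Adj] (S : Finset V) :
    Even (pcnt G S) := by
  classical
  induction S using Finset.induction_on with
  | empty => simp [pcnt]
  | insert _ _ hv ih =>
    rw [pcnt_insert _ _ _ hv]
    exact ih.add (even_two_mul _)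

private lemma eIn_insert (G : SimpleGraph V) [DecidableRel G.Adj] (S : Finset V) (v : V)
    (hv : v ∉ S) :
    eIn G (insert v S) = eIn G S + (G.neighborFinset v ∩ S).card := by
  have h1 := pcnt_insert G S v hv
  obtain ⟨c, hc⟩ := pcnt_even G S
  have h2 : eIn G (insert v S) = pcnt G (insert v S) / 2 := rfl
  have h3 : eIn G S = pcnt G S / 2 := rfl
  omega

end Aux

/-- Lemma on `k`-partitions of minimum lexicographic order. -/
theorem stmt_11 {V : Type*} [Fintype V] [DecidableEq V]
    (G : SimpleGraph V) [DecidableRel G.Adj] (k : ℕ) (hk : 2 ≤ k)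
    (P : Fin k → Finset V) (hP : IsKPartition P)
    (hmin : ∀ Q : Fin k → Finset V, IsKPartition Q → ¬ LexSmaller G Q P)
    (i j : Fin k) (v : V) (hv : v ∈ P i)
    (hd : 2 ≤ (G.neighborFinset v ∩ P i).card) (he : eIn G (P j) < eIn G (P i)) :
    2 ≤ (G.neighborFinset v ∩ P j).card := by
  classical
  by_contra hcon
  push_neg at hcon
  have hij : i ≠ j := by
    intro h; rw [h] at he; exact lt_irrefl _ he
  obtain ⟨hdis, hcov⟩ := hP
  have hvj : v ∉ P j := fun h => Finset.disjoint_left.1 (hdis i j hij) hv h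
  set Q : Fin k → Finset V :=
    fun l => if l = i then (P i).erase v else if l = j then insert v (P j) else P l with hQ
  have hQi : Q i = (P i).erase v := by simp [hQ]
  have hQj : Q j = insert v (P j) := by simp [hQ, Ne.symm hij]
  have hQo : ∀ l, l ≠ i → l ≠ j → Q l = P l := by
    intro l h1 h2; simp [hQ, h1, h2]
  -- Q is a partition
  have hQpart : IsKPartition Q := by
    constructor
    · intro l m hlm
      rw [Finset.disjoint_left]
      intro w hwl hwm
      have key : ∀ l' : Fin k, w ∈ Q l' → w = v ∧ l' = j ∨ w ≠ v ∧ w ∈ P l' := by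
        intro l' hl'
        simp only [hQ] at hl'
        split_ifs at hl' with h1 h2
        · rw [Finset.mem_erase] at hl'
          refine Or.inr ⟨hl'.1, ?_⟩
          rw [h1]; exact hl'.2
        · rw [Finset.mem_insert] at hl'
          rcases hl' with rfl | hl'
          · exact Or.inl ⟨rfl, h2⟩
          · refine Or.inr ⟨fun hwv => hvj (hwv ▸ hl'), ?_⟩
            rw [h2]; exact hl'
        · refine Or.inr ⟨fun hwv => ?_, hl'⟩
          subst hwv
          exact Finset.disjoint_left.1 (hdis l' i h1) hl' hv
      rcases key l hwl with ⟨rfl, rfl⟩ | ⟨hne, hpl⟩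
      · rcases key m hwm with ⟨-, rfl⟩ | ⟨hne2, hpm⟩
        · exact hlm rfl
        · exact hne2 rfl
      · rcases key m hwm with ⟨rfl, rfl⟩ | ⟨hne2, hpm⟩
        · exact hne rfl
        · exact Finset.disjoint_left.1 (hdis l m hlm) hpl hpm
    · intro w
      by_cases hwv : w = v
      · subst hwv
        refine ⟨j, ?_⟩
        rw [hQj]
        exact Finset.mem_insert_self _ _
      · obtain ⟨l, hl⟩ := hcov w
        by_cases h1 : l = i
        · subst h1
          refine ⟨l, ?_⟩
          rw [hQi]
          exact Finset.mem_erase.2 ⟨hwv, hl⟩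
        · by_cases h2 : l = j
          · subst h2
            refine ⟨l, ?_⟩
            rw [hQj]
            exact Finset.mem_insert.2 (Or.inr hl)
          · refine ⟨l, ?_⟩
            rw [hQo l h1 h2]
            exact hl
  -- values of the new parts
  have hNi : G.neighborFinset v ∩ (P i).erase v = G.neighborFinset v ∩ P i := by
    ext w
    simp only [mem_inter, Finset.mem_erase, SimpleGraph.mem_neighborFinset]
    constructor
    · rintro ⟨h1, -, h3⟩; exact ⟨h1, h3⟩
    · rintro ⟨h1, h3⟩; exact ⟨h1, (G.ne_of_adj h1).symm, h3⟩
  have ha : eIn G (P i) = eIn G ((P i).erase v) + (G.neighborFinset v ∩ P i).card := by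
    conv_lhs => rw [← Finset.insert_erase hv]
    rw [eIn_insert G _ v (Finset.notMem_erase _ _), hNi]
  have hb : eIn G (insert v (P j)) = eIn G (P j) + (G.neighborFinset v ∩ P j).card :=
    eIn_insert G _ v hvj
  -- multiset decomposition
  set s : Multiset (Fin k) := (((univ : Finset (Fin k)).erase i).erase j).val with hs
  have hju : j ∈ ((univ : Finset (Fin k)).erase i) := Finset.mem_erase.2 ⟨Ne.symm hij, mem_univ j⟩
  have hju' : j ∈ ((univ : Finset (Fin k)).erase i).val := hju
  rw [Finset.erase_val] at hju'
  have hsplit : (univ : Finset (Fin k)).val = i ::ₘ j ::ₘ s := by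
    rw [hs, Finset.erase_val, Finset.erase_val, Multiset.cons_erase hju',
      Multiset.cons_erase (by exact mem_univ i)]
  have hmemS : ∀ l ∈ s, l ≠ i ∧ l ≠ j := by
    intro l hl
    rw [hs, Finset.mem_val, Finset.mem_erase, Finset.mem_erase] at hl
    exact ⟨hl.2.1, hl.1⟩
  have hmapQ : ((univ : Finset (Fin k)).val.map fun l => eIn G (Q l)) =
      eIn G ((P i).erase v) ::ₘ eIn G (insert v (P j)) ::ₘ s.map (fun l => eIn G (P l)) := by
    rw [hsplit, Multiset.map_cons, Multiset.map_cons]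
    congr 1
    · rw [hQi]
    congr 1
    · rw [hQj]
    · refine Multiset.map_congr rfl ?_
      intro l hl
      obtain ⟨h1, h2⟩ := hmemS l hl
      rw [hQo l h1 h2]
  have hmapP : ((univ : Finset (Fin k)).val.map fun l => eIn G (P l)) =
      eIn G (P i) ::ₘ eIn G (P j) ::ₘ s.map (fun l => eIn G (P l)) := by
    rw [hsplit, Multiset.map_cons, Multiset.map_cons]
  -- the swap is lexicographically smaller
  have hd2 : 2 ≤ (G.neighborFinset v ∩ P i).card := hd
  have he1 : (G.neighborFinset v ∩ P j).card ≤ 1 := by omega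
  have hba : eIn G (P j) < eIn G (P i) := he
  have hlex : LexSmaller G Q P := by
    unfold LexSmaller lexVals
    rw [hmapQ, hmapP]
    by_cases hb0 : eIn G (insert v (P j)) < eIn G (P i)
    · apply lex_of_mcnt _ _ (eIn G (P i))
      · intro n hn
        rw [mcnt_cons, mcnt_cons, mcnt_cons, mcnt_cons]
        split_ifs <;> omega
      · rw [mcnt_cons, mcnt_cons, mcnt_cons, mcnt_cons]
        split_ifs <;> omega
    · apply lex_of_mcnt _ _ (eIn G (P j))
      · intro n hn
        rw [mcnt_cons, mcnt_cons, mcnt_cons, mcnt_cons]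
        split_ifs <;> omega
      · rw [mcnt_cons, mcnt_cons, mcnt_cons, mcnt_cons]
        split_ifs <;> omega
  exact hmin Q hQpart hlex
end

section
/- Let k ≥ 3 be an integer, let G be a finite simple graph, and let (V_1, …, V_k) be a k-partition of G that maximizes the number of crossing edges e(V_1, …, V_k) and, among all such maximizing k-partitions, has minimum lexicographic order. If i ≠ j are indices with e(V_i) ≥ 2 and e(V_j) = 1, then e(V_i, V_j) ≥ 5. -/
open Finset

variable {V : Type*} [Fintype V] [DecidableEq V]

def dnb (G : SimpleGraph V) [DecidableRel G.Adj] (v : V) (S : Finset V) : ℕ :=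
  (S.filter (G.Adj v)).card

variable (G : SimpleGraph V) [DecidableRel G.Adj]

lemma eCross_eq_sum (S T : Finset V) : eCross G S T = ∑ a ∈ S, dnb G a T := by
  unfold eCross dnb
  rw [Finset.card_filter, Fintype.sum_prod_type]
  calc (∑ a, ∑ b, if G.Adj a b ∧ a ∈ S ∧ b ∈ T then (1:ℕ) else 0)
      = ∑ a ∈ S, ∑ b, (if G.Adj a b ∧ a ∈ S ∧ b ∈ T then (1:ℕ) else 0) :=
        (Finset.sum_subset (subset_univ S) (fun a _ ha => by simp [ha])).symm
    _ = ∑ a ∈ S, (T.filter (G.Adj a)).card := by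
        refine Finset.sum_congr rfl fun a ha => ?_
        rw [Finset.card_filter]
        calc (∑ b, if G.Adj a b ∧ a ∈ S ∧ b ∈ T then (1:ℕ) else 0)
            = ∑ b ∈ T, (if G.Adj a b ∧ a ∈ S ∧ b ∈ T then (1:ℕ) else 0) :=
              (Finset.sum_subset (subset_univ T) (fun b _ hb => by simp [hb])).symm
          _ = ∑ b ∈ T, (if G.Adj a b then (1:ℕ) else 0) :=
              Finset.sum_congr rfl fun b hb => by simp [ha, hb]

lemma eCross_eq_sum' (S T : Finset V) : eCross G S T = ∑ b ∈ T, dnb G b S := by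
  unfold eCross dnb
  rw [Finset.card_filter, Fintype.sum_prod_type_right]
  calc (∑ b, ∑ a, if G.Adj a b ∧ a ∈ S ∧ b ∈ T then (1:ℕ) else 0)
      = ∑ b ∈ T, ∑ a, (if G.Adj a b ∧ a ∈ S ∧ b ∈ T then (1:ℕ) else 0) :=
        (Finset.sum_subset (subset_univ T) (fun b _ hb => by simp [hb])).symm
    _ = ∑ b ∈ T, (S.filter (G.Adj b)).card := by
        refine Finset.sum_congr rfl fun b hb => ?_
        rw [Finset.card_filter]
        calc (∑ a, if G.Adj a b ∧ a ∈ S ∧ b ∈ T then (1:ℕ) else 0)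
            = ∑ a ∈ S, (if G.Adj a b ∧ a ∈ S ∧ b ∈ T then (1:ℕ) else 0) :=
              (Finset.sum_subset (subset_univ S) (fun a _ ha => by simp [ha])).symm
          _ = ∑ a ∈ S, (if G.Adj b a then (1:ℕ) else 0) :=
              Finset.sum_congr rfl fun a ha => by simp [ha, hb, G.adj_comm]

lemma eCross_comm (S T : Finset V) : eCross G S T = eCross G T S :=
  (eCross_eq_sum G S T).trans (eCross_eq_sum' G T S).symm

lemma dnb_insert (v w : V) (S : Finset V) (hv : v ∉ S) :
    dnb G w (insert v S) = dnb G w S + (if G.Adj w v then 1 else 0) := by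
  unfold dnb
  rw [Finset.filter_insert]
  split
  · rw [Finset.card_insert_of_notMem (fun h => hv (Finset.mem_of_mem_filter v h))]
  · simp

lemma pc_insert (v : V) (S : Finset V) (hv : v ∉ S) :
    eCross G (insert v S) (insert v S) = eCross G S S + 2 * dnb G v S := by
  rw [eCross_eq_sum, Finset.sum_insert hv, eCross_eq_sum]
  have h1 : dnb G v (insert v S) = dnb G v S := by
    rw [dnb_insert G v v S hv]; simp [G.irrefl]
  have h2 : ∑ w ∈ S, dnb G w (insert v S) = ∑ w ∈ S, dnb G w S + dnb G v S := by
    rw [Finset.sum_congr rfl (fun w _ => dnb_insert G v w S hv), Finset.sum_add_distrib]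
    rw [← Finset.card_filter]
    unfold dnb
    congr 2
    ext w
    simp only [Finset.mem_filter]
    rw [G.adj_comm]
  omega

lemma dnb_erase_self (v : V) (S : Finset V) : dnb G v (S.erase v) = dnb G v S := by
  unfold dnb
  rw [Finset.filter_erase, Finset.erase_eq_of_notMem]
  intro h
  exact G.irrefl (Finset.mem_filter.mp h).2

lemma pc_erase (v : V) (S : Finset V) (hv : v ∈ S) :
    eCross G S S = eCross G (S.erase v) (S.erase v) + 2 * dnb G v S := by
  have h := pc_insert G v (S.erase v) (Finset.notMem_erase v S)
  rw [Finset.insert_erase hv, dnb_erase_self] at h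
  exact h

lemma sum_two_rest {M : Type*} [AddCommMonoid M] {k : ℕ} (f : Fin k → M) (a b : Fin k)
    (hab : a ≠ b) :
    ∑ s, f s = f a + f b + ∑ s ∈ (univ.erase a).erase b, f s := by
  rw [← Finset.add_sum_erase _ f (Finset.mem_univ a)]
  rw [← Finset.add_sum_erase _ f (Finset.mem_erase.mpr ⟨hab.symm, Finset.mem_univ b⟩)]
  rw [add_assoc]

lemma sum_swap4 {α β γ δ M : Type*} [AddCommMonoid M] (s : Finset α) (t : Finset β)
    (u : Finset γ) (w : Finset δ) (f : α → β → γ → δ → M) :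
    ∑ a ∈ s, ∑ b ∈ t, ∑ c ∈ u, ∑ d ∈ w, f a b c d
      = ∑ c ∈ u, ∑ d ∈ w, ∑ a ∈ s, ∑ b ∈ t, f a b c d := by
  calc ∑ a ∈ s, ∑ b ∈ t, ∑ c ∈ u, ∑ d ∈ w, f a b c d
      = ∑ a ∈ s, ∑ c ∈ u, ∑ b ∈ t, ∑ d ∈ w, f a b c d :=
        Finset.sum_congr rfl fun a _ => Finset.sum_comm
    _ = ∑ c ∈ u, ∑ a ∈ s, ∑ b ∈ t, ∑ d ∈ w, f a b c d := Finset.sum_comm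
    _ = ∑ c ∈ u, ∑ a ∈ s, ∑ d ∈ w, ∑ b ∈ t, f a b c d :=
        Finset.sum_congr rfl fun c _ => Finset.sum_congr rfl fun a _ => Finset.sum_comm
    _ = ∑ c ∈ u, ∑ d ∈ w, ∑ a ∈ s, ∑ b ∈ t, f a b c d :=
        Finset.sum_congr rfl fun c _ => Finset.sum_comm

lemma part_uniq {k : ℕ} {P : Fin k → Finset V} (hP : IsKPartition P) {w : V} {s t : Fin k}
    (hs : w ∈ P s) (ht : w ∈ P t) : s = t := by
  by_contra h
  exact Finset.disjoint_left.mp (hP.1 s t h) hs ht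

lemma key_count {k : ℕ} (P : Fin k → Finset V) (hP : IsKPartition P) :
    2 * crossTotal G P + ∑ s, eCross G (P s) (P s)
      = (Finset.univ.filter (fun p : V × V => G.Adj p.1 p.2)).card := by
  have step1 : ∀ a b : V, (if G.Adj a b then (1:ℕ) else 0)
      = ∑ s, ∑ t, if G.Adj a b ∧ a ∈ P s ∧ b ∈ P t then (1:ℕ) else 0 := by
    intro a b
    by_cases h : G.Adj a b
    · obtain ⟨s, hs⟩ := hP.2 a
      obtain ⟨t, ht⟩ := hP.2 b
      rw [Finset.sum_eq_single s]
      · rw [Finset.sum_eq_single t]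
        · simp [h, hs, ht]
        · intro t' _ htt'
          simp only [ite_eq_right_iff]
          rintro ⟨-, -, hbt'⟩
          exact absurd (part_uniq hP hbt' ht) htt'
        · simp
      · intro s' _ hss'
        apply Finset.sum_eq_zero
        intro t' _
        simp only [ite_eq_right_iff]
        rintro ⟨-, has', -⟩
        exact absurd (part_uniq hP has' hs) hss'
      · simp
    · simp [h]
  have step2 : (Finset.univ.filter (fun p : V × V => G.Adj p.1 p.2)).card
      = ∑ s, ∑ t, eCross G (P s) (P t) := by
    rw [Finset.card_filter, Fintype.sum_prod_type]
    calc (∑ a, ∑ b, if G.Adj a b then (1:ℕ) else 0)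
        = ∑ a, ∑ b, ∑ s, ∑ t, (if G.Adj a b ∧ a ∈ P s ∧ b ∈ P t then (1:ℕ) else 0) :=
          Finset.sum_congr rfl fun a _ => Finset.sum_congr rfl fun b _ => step1 a b
      _ = ∑ s, ∑ t, ∑ a, ∑ b, (if G.Adj a b ∧ a ∈ P s ∧ b ∈ P t then (1:ℕ) else 0) :=
          sum_swap4 _ _ _ _ _
      _ = ∑ s, ∑ t, eCross G (P s) (P t) := by
          refine Finset.sum_congr rfl fun s _ => Finset.sum_congr rfl fun t _ => ?_
          rw [eCross, Finset.card_filter, Fintype.sum_prod_type]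
  have tri : ∀ s t : Fin k, eCross G (P s) (P t)
      = (if s < t then eCross G (P s) (P t) else 0)
        + ((if t < s then eCross G (P s) (P t) else 0)
          + (if s = t then eCross G (P s) (P t) else 0)) := by
    intro s t
    rcases lt_trichotomy s t with h | h | h
    · simp [h, not_lt_of_gt h, h.ne, lt_irrefl]
    · simp [h, lt_irrefl]
    · simp [h, not_lt_of_gt h, h.ne', lt_irrefl]
  have step3 : ∑ s, ∑ t, eCross G (P s) (P t)
      = crossTotal G P + (crossTotal G P + ∑ s, eCross G (P s) (P s)) := by
    calc ∑ s, ∑ t, eCross G (P s) (P t)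
        = ∑ s, ∑ t, ((if s < t then eCross G (P s) (P t) else 0)
            + ((if t < s then eCross G (P s) (P t) else 0)
              + (if s = t then eCross G (P s) (P t) else 0))) := by
          exact Finset.sum_congr rfl fun s _ => Finset.sum_congr rfl fun t _ => tri s t
      _ = (∑ s, ∑ t, if s < t then eCross G (P s) (P t) else 0)
            + ((∑ s, ∑ t, if t < s then eCross G (P s) (P t) else 0)
            + ∑ s, ∑ t, if s = t then eCross G (P s) (P t) else 0) := by
          simp only [Finset.sum_add_distrib]
      _ = crossTotal G P + ((∑ s, ∑ t, if t < s then eCross G (P s) (P t) else 0)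
            + ∑ s, ∑ t, if s = t then eCross G (P s) (P t) else 0) := rfl
      _ = crossTotal G P + (crossTotal G P + ∑ s, eCross G (P s) (P s)) := by
          congr 1
          congr 1
          · rw [Finset.sum_comm]
            refine Finset.sum_congr rfl fun s _ => Finset.sum_congr rfl fun t _ => ?_
            rw [eCross_comm]
          · refine Finset.sum_congr rfl fun s _ => ?_
            simp
  rw [step2, step3]
  ring

def moveP {k : ℕ} (P : Fin k → Finset V) (a b : Fin k) (v : V) : Fin k → Finset V :=
  Function.update (Function.update P a ((P a).erase v)) b (insert v (P b))

lemma moveP_apply {k : ℕ} (P : Fin k → Finset V) (a b : Fin k) (v : V) (s : Fin k) :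
    moveP P a b v s = if s = b then insert v (P b) else if s = a then (P a).erase v else P s := by
  simp [moveP, Function.update_apply]

lemma moveP_isPartition {k : ℕ} {P : Fin k → Finset V} (hP : IsKPartition P) {a b : Fin k}
    (hab : a ≠ b) {v : V} (hv : v ∈ P a) : IsKPartition (moveP P a b v) := by
  constructor
  · intro s t hst
    rw [Finset.disjoint_left]
    intro w hws hwt
    rw [moveP_apply] at hws hwt
    have hmem : ∀ (u : Fin k), w ∈ (if u = b then insert v (P b) else if u = a then (P a).erase v else P u) →
        (w = v ∧ u = b) ∨ (w ≠ v ∧ w ∈ P (if u = b then b else u)) := by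
      intro u hu
      split at hu
      · rcases Finset.mem_insert.mp hu with h | h
        · exact Or.inl ⟨h, by assumption⟩
        · right
          constructor
          · rintro rfl
            exact hab (part_uniq hP hv h)
          · simp [*]
      · split at hu
        · exact Or.inr ⟨(Finset.mem_erase.mp hu).1, by simp [*, (Finset.mem_erase.mp hu).2]⟩
        · right
          refine ⟨?_, by simp [*]⟩
          rintro rfl
          have := part_uniq hP hu hv
          simp_all
    rcases hmem s hws with ⟨rfl, rfl⟩ | ⟨hwv, hws'⟩
    · rcases hmem t hwt with ⟨-, rfl⟩ | ⟨hwv, hwt'⟩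
      · exact hst rfl
      · exact hwv rfl
    · rcases hmem t hwt with ⟨rfl, rfl⟩ | ⟨-, hwt'⟩
      · exact hwv rfl
      · apply hst
        have := part_uniq hP hws' hwt'
        split at hws' <;> split at hwt' <;> simp_all
  · intro w
    by_cases hwv : w = v
    · exact ⟨b, by rw [moveP_apply]; simp [hwv]⟩
    · obtain ⟨s, hs⟩ := hP.2 w
      by_cases hsb : s = b
      · exact ⟨b, by rw [moveP_apply]; simp [Finset.mem_insert, hsb ▸ hs]⟩
      · by_cases hsa : s = a
        · exact ⟨a, by rw [moveP_apply]; simp [hab, Finset.mem_erase, hwv, hsa ▸ hs]⟩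
        · exact ⟨s, by rw [moveP_apply]; simp [hsb, hsa, hs]⟩

lemma moveP_phi {k : ℕ} {P : Fin k → Finset V} (hP : IsKPartition P) {a b : Fin k}
    (hab : a ≠ b) {v : V} (hv : v ∈ P a) :
    (∑ s, eCross G (moveP P a b v s) (moveP P a b v s)) + 2 * dnb G v (P a)
      = (∑ s, eCross G (P s) (P s)) + 2 * dnb G v (P b) := by
  have hvb : v ∉ P b := fun h => hab (part_uniq hP hv h)
  have hQa : moveP P a b v a = (P a).erase v := by rw [moveP_apply]; simp [hab]
  have hQb : moveP P a b v b = insert v (P b) := by rw [moveP_apply]; simp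
  rw [sum_two_rest (fun s => eCross G (moveP P a b v s) (moveP P a b v s)) a b hab,
      sum_two_rest (fun s => eCross G (P s) (P s)) a b hab]
  have hrest : ∑ s ∈ (univ.erase a).erase b, eCross G (moveP P a b v s) (moveP P a b v s)
      = ∑ s ∈ (univ.erase a).erase b, eCross G (P s) (P s) := by
    refine Finset.sum_congr rfl fun s hs => ?_
    have h1 : s ≠ b := (Finset.mem_erase.mp hs).1
    have h2 : s ≠ a := (Finset.mem_erase.mp (Finset.mem_erase.mp hs).2).1
    rw [moveP_apply]
    simp [h1, h2]
  rw [hrest, hQa, hQb, pc_insert G v (P b) hvb, pc_erase G v (P a) hv]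
  ring

/-- If `(V₁,…,V_k)` maximizes the number of crossing edges and, among all maximizing
`k`-partitions, has minimum lexicographic order, then `e(Vᵢ,Vⱼ) ≥ 5` whenever
`e(Vᵢ) ≥ 2` and `e(Vⱼ) = 1`. -/
theorem stmt_19 {V : Type*} [Fintype V] [DecidableEq V]
    (G : SimpleGraph V) [DecidableRel G.Adj] (k : ℕ) (hk : 3 ≤ k)
    (P : Fin k → Finset V) (hP : IsKPartition P)
    (hmax : crossTotal G P = maxCut G k)
    (hmin : ∀ Q : Fin k → Finset V, IsKPartition Q → crossTotal G Q = maxCut G k →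
      ¬ LexSmaller G Q P)
    (i j : Fin k) (hij : i ≠ j) (hi : 2 ≤ eIn G (P i)) (hj : eIn G (P j) = 1) :
    5 ≤ eCross G (P i) (P j) := by
  classical
  by_contra hcon
  push_neg at hcon
  -- boundedness and Φ-minimality
  have hbdd : BddAbove {n : ℕ | ∃ Q : Fin k → Finset V, IsKPartition Q ∧ crossTotal G Q = n} := by
    refine ⟨(Finset.univ.filter (fun p : V × V => G.Adj p.1 p.2)).card, ?_⟩
    rintro n ⟨Q, hQ, rfl⟩
    have := key_count G Q hQ
    omega
  have hle : ∀ Q : Fin k → Finset V, IsKPartition Q → crossTotal G Q ≤ crossTotal G P := by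
    intro Q hQ
    rw [hmax]
    exact le_csSup hbdd ⟨Q, hQ, rfl⟩
  have hphi : ∀ Q : Fin k → Finset V, IsKPartition Q →
      (∑ s, eCross G (P s) (P s)) ≤ ∑ s, eCross G (Q s) (Q s) := by
    intro Q hQ
    have h1 := key_count G P hP
    have h2 := key_count G Q hQ
    have h3 := hle Q hQ
    omega
  have MI : ∀ (a b : Fin k), a ≠ b → ∀ v ∈ P a, dnb G v (P a) ≤ dnb G v (P b) := by
    intro a b hab v hv
    have h1 := moveP_phi G hP hab hv
    have h2 := hphi _ (moveP_isPartition hP hab hv)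
    omega
  -- basic counts
  have hpcA : 4 ≤ eCross G (P i) (P i) := by
    have h : eIn G (P i) = eCross G (P i) (P i) / 2 := rfl
    omega
  have hpcB : 2 ≤ eCross G (P j) (P j) ∧ eCross G (P j) (P j) ≤ 3 := by
    have h : eIn G (P j) = eCross G (P j) (P j) / 2 := rfl
    omega
  have hAsum : 4 ≤ ∑ v ∈ P i, dnb G v (P i) := by
    rw [← eCross_eq_sum]; exact hpcA
  have hself : ∀ v ∈ P i, dnb G v (P i) ≤ dnb G v (P j) := MI i j hij
  have hEC1 : eCross G (P i) (P j) = ∑ v ∈ P i, dnb G v (P j) := eCross_eq_sum G _ _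
  have hforced : ∀ v ∈ P i, dnb G v (P j) = dnb G v (P i) := by
    by_contra hc
    push_neg at hc
    obtain ⟨v, hv, hne⟩ := hc
    have hlt : dnb G v (P i) < dnb G v (P j) :=
      lt_of_le_of_ne (hself v hv) (fun h => hne h.symm)
    have := Finset.sum_lt_sum hself ⟨v, hv, hlt⟩
    omega
  -- structure of P j
  have hBsum : eCross G (P j) (P j) = ∑ v ∈ P j, dnb G v (P j) := eCross_eq_sum G _ _
  have hone : ∀ z ∈ P j, dnb G z (P j) ≤ 1 := by
    intro z hz
    by_contra h
    push_neg at h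
    have h' : 1 < ((P j).filter (G.Adj z)).card := h
    obtain ⟨y1, hy1, y2, hy2, hy12⟩ := Finset.one_lt_card.mp h'
    have hy1B : y1 ∈ P j := Finset.mem_of_mem_filter y1 hy1
    have hy2B : y2 ∈ P j := Finset.mem_of_mem_filter y2 hy2
    have ha1 : G.Adj z y1 := (Finset.mem_filter.mp hy1).2
    have ha2 : G.Adj z y2 := (Finset.mem_filter.mp hy2).2
    have hz1 : z ≠ y1 := ha1.ne
    have hz2 : z ≠ y2 := ha2.ne
    have hd1 : 1 ≤ dnb G y1 (P j) :=
      Finset.card_pos.mpr ⟨z, Finset.mem_filter.mpr ⟨hz, ha1.symm⟩⟩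
    have hd2 : 1 ≤ dnb G y2 (P j) :=
      Finset.card_pos.mpr ⟨z, Finset.mem_filter.mpr ⟨hz, ha2.symm⟩⟩
    have hsub : ({z, y1, y2} : Finset V) ⊆ P j := by
      intro w hw
      rcases Finset.mem_insert.mp hw with rfl | hw
      · exact hz
      rcases Finset.mem_insert.mp hw with rfl | hw
      · exact hy1B
      · rw [Finset.mem_singleton.mp hw]; exact hy2B
    have hsum3 := Finset.sum_le_sum_of_subset (f := fun v => dnb G v (P j)) hsub
    rw [Finset.sum_insert (by simp [hz1, hz2]), Finset.sum_insert (by simp [hy12]),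
      Finset.sum_singleton] at hsum3
    have hzd : 2 ≤ dnb G z (P j) := h'
    have hsum3' : dnb G z (P j) + (dnb G y1 (P j) + dnb G y2 (P j))
        ≤ ∑ v ∈ P j, dnb G v (P j) := hsum3
    omega
  obtain ⟨x, hxB, hxd⟩ : ∃ x ∈ P j, dnb G x (P j) ≠ 0 := by
    by_contra hc
    push_neg at hc
    have h0 : ∑ v ∈ P j, dnb G v (P j) = 0 := Finset.sum_eq_zero hc
    omega
  have hx1 : dnb G x (P j) = 1 := le_antisymm (hone x hxB) (by omega)
  have hx1' : ((P j).filter (G.Adj x)).card = 1 := hx1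
  obtain ⟨y, hy⟩ : ((P j).filter (G.Adj x)).Nonempty := Finset.card_pos.mp (by omega)
  have hyB : y ∈ P j := Finset.mem_of_mem_filter y hy
  have hxy : G.Adj x y := (Finset.mem_filter.mp hy).2
  have hy1 : dnb G y (P j) = 1 :=
    le_antisymm (hone y hyB)
      (Finset.card_pos.mpr ⟨x, Finset.mem_filter.mpr ⟨hxB, hxy.symm⟩⟩)
  have hxyne : x ≠ y := hxy.ne
  -- the key double-move bound
  have key3 : ∀ z ∈ P j, dnb G z (P j) = 1 → 3 ≤ dnb G z (P i) := by
    intro z hzB hz1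
    have hzA : 1 ≤ dnb G z (P i) := by
      have := MI j i hij.symm z hzB
      omega
    have hzA' : 1 ≤ ((P i).filter (G.Adj z)).card := hzA
    obtain ⟨p, hp⟩ : ((P i).filter (G.Adj z)).Nonempty := Finset.card_pos.mp (by omega)
    have hpA : p ∈ P i := Finset.mem_of_mem_filter p hp
    have hzp : G.Adj z p := (Finset.mem_filter.mp hp).2
    have hpB : p ∉ P j := fun h => hij (part_uniq hP hpA h)
    have heqp : dnb G p (P j) = dnb G p (P i) := hforced p hpA
    have hQ1 := moveP_isPartition hP hij hpA
    have e1 := moveP_phi G hP hij hpA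
    have hQ1i : moveP P i j p i = (P i).erase p := by rw [moveP_apply]; simp [hij]
    have hQ1j : moveP P i j p j = insert p (P j) := by rw [moveP_apply]; simp
    have hzQ1j : z ∈ moveP P i j p j := by
      rw [hQ1j]; exact Finset.mem_insert_of_mem hzB
    have hQ2 := moveP_isPartition hQ1 hij.symm hzQ1j
    have e2 := moveP_phi G hQ1 hij.symm hzQ1j
    rw [hQ1j, hQ1i] at e2
    have hd1 : dnb G z (insert p (P j)) = dnb G z (P j) + 1 := by
      rw [dnb, Finset.filter_insert, if_pos hzp,
        Finset.card_insert_of_notMem (fun h => hpB (Finset.mem_of_mem_filter p h))]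
      rfl
    have hd2 : dnb G z ((P i).erase p) + 1 = dnb G z (P i) := by
      simp only [dnb, Finset.filter_erase]
      rw [Finset.card_erase_of_mem (Finset.mem_filter.mpr ⟨hpA, hzp⟩)]
      omega
    have hphi2 := hphi _ hQ2
    omega
  have h3x := key3 x hxB hx1
  have h3y := key3 y hyB hy1
  have hEC2 : eCross G (P i) (P j) = ∑ b ∈ P j, dnb G b (P i) := eCross_eq_sum' G _ _
  have hpair : dnb G x (P i) + dnb G y (P i) ≤ ∑ b ∈ P j, dnb G b (P i) := by
    have hsub : ({x, y} : Finset V) ⊆ P j := by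
      intro w hw
      rcases Finset.mem_insert.mp hw with rfl | hw
      · exact hxB
      · rw [Finset.mem_singleton.mp hw]; exact hyB
    have h := Finset.sum_le_sum_of_subset (f := fun v => dnb G v (P i)) hsub
    rwa [Finset.sum_pair hxyne] at h
  omega
end
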